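/- Let $d = 3$ and $\gamma(x) = C(|x|^{-d+1} + |x|^{-d+2})$. There exists a constant $C' < \infty$ such that for all $r \in (0,1]$ and all unit vectors $v \in S^{d-1}$, $r^{-1} \int_0^\infty e^{-s} \int_{\mathbb{R}^d} \gamma(y)\, \mathbf{1}\{|sv - y| < 3r\} \, dy \, ds \le C' r$. -/

import Mathlib

open MeasureTheory Set Metric

noncomputable def greenKernel (C : ℝ) (x : EuclideanSpace ℝ (Fin 3)) : ℝ :=
  C * (‖x‖ ^ (-(2:ℝ)) + ‖x‖ ^ (-(1:ℝ)))

local notation "E" => EuclideanSpace ℝ (Fin 3)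

lemma finrank_E : Module.finrank ℝ (EuclideanSpace ℝ (Fin 3)) = 3 := by
  simp [finrank_euclideanSpace]

lemma lint_polar (g : ℝ → ENNReal) (hg : Measurable g) :
    ∫⁻ x : E, g ‖x‖ = 3 * volume (ball (0:E) 1) *
      ∫⁻ y in Ioi (0:ℝ), ENNReal.ofReal (y ^ 2) * g y := by
  calc ∫⁻ x : E, g ‖x‖
      = ∫⁻ x : E, g ‖x‖ ∂((volume : Measure E).restrict {(0:E)}ᶜ) := by
        rw [restrict_compl_singleton]
    _ = ∫⁻ x : ({(0:E)}ᶜ : Set E), g ‖(x:E)‖ ∂((volume : Measure E).comap Subtype.val) :=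
        (lintegral_subtype_comap (measurableSet_singleton (0:E)).compl
          (fun x => g ‖x‖)).symm
    _ = ∫⁻ z : sphere (0:E) 1 × Ioi (0:ℝ), g z.2
          ∂((volume : Measure E).toSphere.prod (.volumeIoiPow 2)) := by
        have h := (Measure.measurePreserving_homeomorphUnitSphereProd
          (volume : Measure E)).lintegral_comp_emb (Homeomorph.measurableEmbedding _)
          (fun z : sphere (0:E) 1 × Ioi (0:ℝ) => g z.2)
        rw [finrank_E] at h
        convert h using 3 with x
        simp [homeomorphUnitSphereProd_apply_snd_coe]
    _ = (volume : Measure E).toSphere univ * ∫⁻ y : Ioi (0:ℝ), g y ∂(Measure.volumeIoiPow 2) := by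
        rw [lintegral_prod (fun z : sphere (0:E) 1 × Ioi (0:ℝ) => g ↑z.2)
          (show Measurable fun z : sphere (0:E) 1 × Ioi (0:ℝ) => g ↑z.2 by fun_prop).aemeasurable,
          ]
        simp [lintegral_const, mul_comm]
    _ = 3 * volume (ball (0:E) 1) * ∫⁻ y in Ioi (0:ℝ), ENNReal.ofReal (y ^ 2) * g y := by
        rw [Measure.volumeIoiPow,
          lintegral_withDensity_eq_lintegral_mul _
            (by fun_prop)
            (show Measurable fun y : Ioi (0:ℝ) => g ↑y from hg.comp measurable_subtype_coe),
          show ((fun r : Ioi (0:ℝ) => ENNReal.ofReal (↑r ^ 2)) * fun y : Ioi (0:ℝ) => g ↑y)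
            = fun a : Ioi (0:ℝ) => (fun y : ℝ => ENNReal.ofReal (y ^ 2) * g y) ↑a from rfl,
          lintegral_subtype_comap measurableSet_Ioi]
        rw [Measure.toSphere_apply_univ, finrank_E]
        push_cast
        ring

lemma lint_ball {R : ℝ} (hR : 0 < R) :
    ∫⁻ y in ball (0:E) R, ENNReal.ofReal (‖y‖ ^ (-(2:ℝ)))
      = 3 * volume (ball (0:E) 1) * ENNReal.ofReal R := by
  set g : ℝ → ENNReal := Set.indicator (Iio R) (fun t => ENNReal.ofReal (t ^ (-(2:ℝ)))) with hgdef
  have hg : Measurable g := by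
    apply Measurable.indicator _ measurableSet_Iio
    fun_prop
  have h1 : ∫⁻ x : E, g ‖x‖ = ∫⁻ y in ball (0:E) R, ENNReal.ofReal (‖y‖ ^ (-(2:ℝ))) := by
    rw [← lintegral_indicator measurableSet_ball]
    refine lintegral_congr fun x => ?_
    by_cases h : ‖x‖ < R <;>
      simp [hgdef, Set.indicator_apply, mem_ball_zero_iff, mem_Iio, h]
  have h2 : ∫⁻ y in Ioi (0:ℝ), ENNReal.ofReal (y ^ 2) * g y = ENNReal.ofReal R := by
    calc ∫⁻ y in Ioi (0:ℝ), ENNReal.ofReal (y ^ 2) * g y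
        = ∫⁻ y in Ioi (0:ℝ), Set.indicator (Iio R)
            (fun t => ENNReal.ofReal (t ^ 2) * ENNReal.ofReal (t ^ (-(2:ℝ)))) y := by
          refine lintegral_congr fun y => ?_
          by_cases h : y < R <;>
            simp [hgdef, Set.indicator_apply, mem_Iio, h]
      _ = ∫⁻ y in Ioo (0:ℝ) R, ENNReal.ofReal (y ^ 2) * ENNReal.ofReal (y ^ (-(2:ℝ))) := by
          rw [lintegral_indicator measurableSet_Iio, Measure.restrict_restrict measurableSet_Iio,
            inter_comm, Ioi_inter_Iio]
      _ = ∫⁻ _ in Ioo (0:ℝ) R, 1 := by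
          refine setLIntegral_congr_fun measurableSet_Ioo (fun y hy => ?_)
          rw [← ENNReal.ofReal_mul (sq_nonneg y)]
          rw [show y ^ 2 * y ^ (-(2:ℝ)) = 1 by
            rw [← Real.rpow_natCast y 2, ← Real.rpow_add hy.1]
            norm_num]
          simp
      _ = ENNReal.ofReal R := by
          simp [setLIntegral_one, Real.volume_Ioo]
  rw [← h1, lint_polar g hg, h2]

lemma meas_invsq : Measurable (fun y : E => ‖y‖ ^ (-(2:ℝ))) := by fun_prop

lemma integrableOn_invsq {R : ℝ} (hR : 0 < R) :
    IntegrableOn (fun y : E => ‖y‖ ^ (-(2:ℝ))) (ball (0:E) R) := by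
  constructor
  · exact meas_invsq.aestronglyMeasurable
  · rw [hasFiniteIntegral_iff_ofReal (ae_of_all _ fun y => Real.rpow_nonneg (norm_nonneg y) _)]
    rw [lint_ball hR]
    exact ENNReal.mul_lt_top
      (ENNReal.mul_lt_top (by simp) measure_ball_lt_top) ENNReal.ofReal_lt_top

lemma integral_invsq {R : ℝ} (hR : 0 < R) :
    ∫ y in ball (0:E) R, ‖y‖ ^ (-(2:ℝ))
      = 3 * (volume (ball (0:E) 1)).toReal * R := by
  rw [integral_eq_lintegral_of_nonneg_ae (ae_of_all _ fun y => Real.rpow_nonneg (norm_nonneg y) _)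
    meas_invsq.aestronglyMeasurable]
  rw [lint_ball hR, ENNReal.toReal_mul, ENNReal.toReal_mul,
    ENNReal.toReal_ofReal hR.le]
  simp


lemma inv_le_invsq_add_one {t : ℝ} (ht : 0 ≤ t) : t ^ (-(1:ℝ)) ≤ t ^ (-(2:ℝ)) + 1 := by
  rcases eq_or_lt_of_le ht with h0 | h0
  · rw [← h0, Real.zero_rpow (by norm_num), Real.zero_rpow (by norm_num)]; norm_num
  rcases le_or_gt t 1 with h1 | h1
  · have := Real.rpow_le_rpow_of_exponent_ge h0 h1 (show -(2:ℝ) ≤ -(1:ℝ) by norm_num)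
    linarith
  · have h2 : t ^ (-(1:ℝ)) ≤ 1 := Real.rpow_le_one_of_one_le_of_nonpos h1.le (by norm_num)
    have h3 : 0 ≤ t ^ (-(2:ℝ)) := Real.rpow_nonneg ht _
    linarith

lemma green_nonneg {C : ℝ} (hC : 0 ≤ C) (y : E) : 0 ≤ greenKernel C y := by
  unfold greenKernel
  have := Real.rpow_nonneg (norm_nonneg y) (-(2:ℝ))
  have := Real.rpow_nonneg (norm_nonneg y) (-(1:ℝ))
  nlinarith

lemma green_le_dom {C : ℝ} (hC : 0 ≤ C) (y : E) :
    greenKernel C y ≤ C * (2 * ‖y‖ ^ (-(2:ℝ)) + 1) := by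
  unfold greenKernel
  have h := inv_le_invsq_add_one (norm_nonneg y)
  nlinarith

lemma dom_integrableOn {C R : ℝ} (hR : 0 < R) :
    IntegrableOn (fun y : E => C * (2 * ‖y‖ ^ (-(2:ℝ)) + 1)) (ball (0:E) R) := by
  refine Integrable.const_mul ?_ C
  exact (((integrableOn_invsq hR).const_mul 2).add
    (integrableOn_const measure_ball_lt_top.ne))

lemma dom_integral {C R : ℝ} (hC : 0 ≤ C) (hR : 0 < R) :
    ∫ y in ball (0:E) R, C * (2 * ‖y‖ ^ (-(2:ℝ)) + 1)
      = C * (6 * (volume (ball (0:E) 1)).toReal * R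
          + R ^ 3 * (volume (ball (0:E) 1)).toReal) := by
  rw [integral_const_mul, integral_add ((integrableOn_invsq hR).const_mul 2)
      (integrableOn_const measure_ball_lt_top.ne),
    integral_const_mul, integral_invsq hR, setIntegral_const, measureReal_def,
    Measure.addHaar_ball _ _ hR.le, finrank_E]
  rw [ENNReal.toReal_mul, ENNReal.toReal_ofReal (by positivity)]
  simp only [smul_eq_mul, mul_one]
  ring

lemma rpow_neg_two_eq {s : ℝ} (hs : 0 < s) : s ^ (-(2:ℝ)) = (s ^ 2)⁻¹ := by
  rw [Real.rpow_neg hs.le, show ((2:ℝ)) = ((2:ℕ):ℝ) by norm_num, Real.rpow_natCast]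

lemma green_le_const {C : ℝ} (hC : 0 ≤ C) {s : ℝ} (hs : 0 < s) (y : E) (hy : s/2 ≤ ‖y‖) :
    greenKernel C y ≤ 6 * C * ((s^2)⁻¹ + 1) := by
  have hhalf : (0:ℝ) < s/2 := by linarith
  have e2 : ‖y‖ ^ (-(2:ℝ)) ≤ (s/2) ^ (-(2:ℝ)) :=
    Real.rpow_le_rpow_of_nonpos hhalf hy (by norm_num)
  have e1 : ‖y‖ ^ (-(1:ℝ)) ≤ (s/2) ^ (-(1:ℝ)) :=
    Real.rpow_le_rpow_of_nonpos hhalf hy (by norm_num)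
  have c2 : (s/2) ^ (-(2:ℝ)) = 4 * (s^2)⁻¹ := by
    rw [rpow_neg_two_eq hhalf]
    field_simp
    ring
  have c1 : (s/2) ^ (-(1:ℝ)) = 2 * s⁻¹ := by
    rw [Real.rpow_neg_one, inv_div]
    ring
  have hsinv : s⁻¹ ≤ (s^2)⁻¹ + 1 := by
    rw [← sub_nonneg, show (s^2)⁻¹ + 1 - s⁻¹ = (1 + s^2 - s)/s^2 by field_simp]
    apply div_nonneg _ (by positivity)
    nlinarith [sq_nonneg (s-1)]
  have hσ : (0:ℝ) ≤ (s^2)⁻¹ := by positivity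
  unfold greenKernel
  have h1 : ‖y‖ ^ (-(2:ℝ)) + ‖y‖ ^ (-(1:ℝ)) ≤ 6 * ((s^2)⁻¹ + 1) := by
    rw [c2] at e2; rw [c1] at e1
    nlinarith
  nlinarith [mul_le_mul_of_nonneg_left h1 hC]

/-- In `d = 3`: `r⁻¹ ∫₀^∞ e^{-s} ∫_{|sv-y|<3r} γ(y) dy ds ≤ C' r`. -/
theorem stmt7 (C : ℝ) (hC : 0 ≤ C) :
    ∃ C' : ℝ, 0 < C' ∧
      ∀ r : ℝ, r ∈ Set.Ioc (0:ℝ) 1 →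
      ∀ v : EuclideanSpace ℝ (Fin 3), ‖v‖ = 1 →
        r⁻¹ * ∫ s in Set.Ioi (0:ℝ), Real.exp (-s) *
          (∫ y in {y : EuclideanSpace ℝ (Fin 3) | ‖s • v - y‖ < 3 * r}, greenKernel C y)
          ≤ C' * r := by
  set V := (volume (ball (0:(EuclideanSpace ℝ (Fin 3))) 1)).toReal with hVdef
  have hV : 0 ≤ V := ENNReal.toReal_nonneg
  set A := 783*C*V with hAdef
  set B := 162*C*V with hBdef
  have hA0 : 0 ≤ A := by positivity
  have hB0 : 0 ≤ B := by positivity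
  refine ⟨6*A + 7*B/6 + 1, by positivity, ?_⟩
  rintro r ⟨hr0, hr1⟩ v hv
  have hset : ∀ s : ℝ, {y : E | ‖s • v - y‖ < 3*r} = ball (s • v) (3*r) := by
    intro s; ext y; simp [mem_ball, dist_eq_norm, norm_sub_rev]
  simp only [hset]
  set G : ℝ → ℝ := fun s => ∫ y in ball (s • v) (3*r), greenKernel C y with hGdef
  have hG0 : ∀ s : ℝ, 0 ≤ G s := fun s =>
    setIntegral_nonneg measurableSet_ball (fun y _ => green_nonneg hC y)
  have h6r : (0:ℝ) < 6*r := by linarith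
  have hr3 : r^3 ≤ r := by
    have := mul_nonneg (mul_nonneg hr0.le (sub_nonneg.2 hr1)) (show (0:ℝ) ≤ 1 + r by linarith)
    nlinarith
  -- small s bound
  have hb : ∀ s ∈ Ioc (0:ℝ) (6*r), G s ≤ A * r := by
    rintro s ⟨hs0, hs6⟩
    have h9 : (0:ℝ) < 9*r := by linarith
    have hsub : ball (s • v) (3*r) ⊆ ball (0:E) (9*r) := by
      apply ball_subset_ball'
      have hd : dist (s • v) (0:E) = s := by
        rw [dist_zero_right, norm_smul, hv, Real.norm_eq_abs, abs_of_pos hs0, mul_one]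
      rw [hd]; linarith
    have step1 : G s ≤ ∫ y in ball (s • v) (3*r), C * (2 * ‖y‖ ^ (-(2:ℝ)) + 1) :=
      integral_mono_of_nonneg (ae_of_all _ (green_nonneg hC))
        ((dom_integrableOn h9).mono_set hsub) (ae_of_all _ (green_le_dom hC))
    have hdomnn : ∀ y : E, 0 ≤ C * (2 * ‖y‖ ^ (-(2:ℝ)) + 1) := fun y => by
      have := Real.rpow_nonneg (norm_nonneg y) (-(2:ℝ)); positivity
    have step2 : ∫ y in ball (s • v) (3*r), C * (2 * ‖y‖ ^ (-(2:ℝ)) + 1)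
        ≤ ∫ y in ball (0:E) (9*r), C * (2 * ‖y‖ ^ (-(2:ℝ)) + 1) :=
      setIntegral_mono_set (dom_integrableOn h9) (ae_of_all _ hdomnn)
        (HasSubset.Subset.eventuallyLE hsub)
    have step3 : ∫ y in ball (0:E) (9*r), C * (2 * ‖y‖ ^ (-(2:ℝ)) + 1) ≤ A * r := by
      rw [dom_integral hC h9]
      have hCV : 0 ≤ C * V := mul_nonneg hC hV
      rw [hAdef]
      nlinarith [mul_le_mul_of_nonneg_left hr3 hCV]
    linarith
  -- large s bound
  have hc : ∀ s ∈ Ioi (6*r), G s ≤ B * r^3 * (s ^ (-(2:ℝ)) + 1) := by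
    intro s hs
    rw [mem_Ioi] at hs
    have hs0 : (0:ℝ) < s := lt_trans h6r hs
    have hlow : ∀ y ∈ ball (s • v) (3*r), greenKernel C y ≤ 6 * C * ((s^2)⁻¹ + 1) := by
      intro y hy
      apply green_le_const hC hs0
      have hns : ‖s • v‖ = s := by
        rw [norm_smul, hv, Real.norm_eq_abs, abs_of_pos hs0, mul_one]
      have h1 : ‖s • v‖ - ‖y‖ ≤ ‖s • v - y‖ := norm_sub_norm_le _ _
      have h2 : ‖s • v - y‖ < 3*r := by
        rw [← dist_eq_norm, dist_comm]
        exact mem_ball.mp hy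
      rw [hns] at h1
      linarith
    have hintc : IntegrableOn (fun _ : E => 6 * C * ((s^2)⁻¹ + 1)) (ball (s • v) (3*r)) :=
      integrableOn_const measure_ball_lt_top.ne
    have hle : G s ≤ ∫ _ in ball (s • v) (3*r), 6 * C * ((s^2)⁻¹ + 1) :=
      integral_mono_of_nonneg (ae_of_all _ (green_nonneg hC)) hintc
        ((ae_restrict_iff' measurableSet_ball).2 (ae_of_all _ hlow))
    rw [setIntegral_const, measureReal_def, Measure.addHaar_ball _ _ (by linarith : (0:ℝ) ≤ 3*r),
      finrank_E, ENNReal.toReal_mul, ENNReal.toReal_ofReal (by positivity)] at hle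
    calc G s ≤ (3*r)^3 * V * (6 * C * ((s^2)⁻¹ + 1)) := by
          simpa only [smul_eq_mul] using hle
      _ = B * r^3 * ((s^2)⁻¹ + 1) := by rw [hBdef]; ring
      _ = B * r^3 * (s ^ (-(2:ℝ)) + 1) := by rw [rpow_neg_two_eq hs0]
  -- dominating function
  set h : ℝ → ℝ := fun s => Set.indicator (Ioc (0:ℝ) (6*r)) (fun _ => A*r) s
    + Set.indicator (Ioi (6*r)) (fun t => B*r^3*(t ^ (-(2:ℝ)) + Real.exp (-t))) s with hhdef
  have hi1 : Integrable (fun s => Set.indicator (Ioc (0:ℝ) (6*r)) (fun _ => A*r) s) volume :=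
    (integrableOn_const measure_Ioc_lt_top.ne).integrable_indicator measurableSet_Ioc
  have hexpint : IntegrableOn (fun t : ℝ => Real.exp (-t)) (Ioi (6*r)) volume := by
    simpa using exp_neg_integrableOn_Ioi (6*r) (by norm_num : (0:ℝ) < 1)
  have hi2f : IntegrableOn (fun t : ℝ => B*r^3*(t ^ (-(2:ℝ)) + Real.exp (-t))) (Ioi (6*r)) volume :=
    ((integrableOn_Ioi_rpow_of_lt (by norm_num) h6r).add hexpint).const_mul _
  have hi2 : Integrable (fun s => Set.indicator (Ioi (6*r))
      (fun t => B*r^3*(t ^ (-(2:ℝ)) + Real.exp (-t))) s) volume :=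
    hi2f.integrable_indicator measurableSet_Ioi
  have hmono : ∀ s ∈ Ioi (0:ℝ), Real.exp (-s) * G s ≤ h s := by
    intro s hs
    rw [mem_Ioi] at hs
    have hexp1 : Real.exp (-s) ≤ 1 := Real.exp_le_one_iff.mpr (by linarith)
    have hexp0 : (0:ℝ) ≤ Real.exp (-s) := (Real.exp_pos _).le
    rcases le_or_gt s (6*r) with hle | hgt
    · rw [hhdef]
      simp only [Set.indicator_of_mem (show s ∈ Ioc (0:ℝ) (6*r) from ⟨hs, hle⟩),
        Set.indicator_of_notMem (show s ∉ Ioi (6*r) by simp only [mem_Ioi, not_lt]; exact hle),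
        add_zero]
      have hAb := hb s ⟨hs, hle⟩
      nlinarith [hG0 s, mul_le_mul_of_nonneg_right hexp1 (hG0 s)]
    · rw [hhdef]
      simp only [Set.indicator_of_mem (mem_Ioi.mpr hgt),
        Set.indicator_of_notMem (show s ∉ Ioc (0:ℝ) (6*r) by
          simp only [mem_Ioc, not_and, not_le]; intro _; exact hgt),
        zero_add]
      have hcs := hc s (mem_Ioi.mpr hgt)
      have hσ : (0:ℝ) ≤ s ^ (-(2:ℝ)) := Real.rpow_nonneg (by linarith) _
      have hBr3 : (0:ℝ) ≤ B * r^3 := by positivity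
      have step := mul_le_mul_of_nonneg_left hcs hexp0
      nlinarith [mul_nonneg (mul_nonneg hBr3 hσ) (sub_nonneg.2 hexp1)]
  -- compare with the dominating function
  have hGmeas : ∀ s : ℝ, 0 ≤ Real.exp (-s) * G s := fun s =>
    mul_nonneg (Real.exp_pos _).le (hG0 s)
  have hint : ∫ s in Ioi (0:ℝ), Real.exp (-s) * G s ≤ ∫ s in Ioi (0:ℝ), h s :=
    integral_mono_of_nonneg (ae_of_all _ hGmeas) ((hi1.add hi2).integrableOn)
      ((ae_restrict_iff' measurableSet_Ioi).2 (ae_of_all _ hmono))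
  -- compute the integral of h
  have hI : ∫ s in Ioi (0:ℝ), h s
      = 6*r*(A*r) + B*r^3*((6*r)⁻¹ + Real.exp (-(6*r))) := by
    rw [hhdef]
    rw [integral_add hi1.integrableOn hi2.integrableOn]
    have hI1 : ∫ s in Ioi (0:ℝ), Set.indicator (Ioc (0:ℝ) (6*r)) (fun _ => A*r) s
        = 6*r*(A*r) := by
      rw [setIntegral_indicator measurableSet_Ioc,
        inter_eq_right.mpr Ioc_subset_Ioi_self, setIntegral_const, measureReal_def, Real.volume_Ioc,
        sub_zero, ENNReal.toReal_ofReal (by linarith), smul_eq_mul]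
    have hI2 : ∫ s in Ioi (0:ℝ), Set.indicator (Ioi (6*r))
        (fun t => B*r^3*(t ^ (-(2:ℝ)) + Real.exp (-t))) s
        = B*r^3*((6*r)⁻¹ + Real.exp (-(6*r))) := by
      rw [setIntegral_indicator measurableSet_Ioi,
        inter_eq_right.mpr (Ioi_subset_Ioi (by linarith)),
        integral_const_mul,
        integral_add (integrableOn_Ioi_rpow_of_lt (by norm_num) h6r) hexpint,
        integral_Ioi_rpow_of_lt (by norm_num) h6r, integral_exp_neg_Ioi]
      norm_num [Real.rpow_neg_one]
    rw [hI1, hI2]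
  rw [hI] at hint
  -- conclude
  have hfin : r⁻¹ * (6*r*(A*r) + B*r^3*((6*r)⁻¹ + Real.exp (-(6*r))))
      ≤ (6*A + 7*B/6 + 1) * r := by
    have heq : r⁻¹ * (6*r*(A*r) + B*r^3*((6*r)⁻¹ + Real.exp (-(6*r))))
        = 6*A*r + B/6*r + B*r^2*Real.exp (-(6*r)) := by
      field_simp
      ring
    rw [heq]
    have he1 : Real.exp (-(6*r)) ≤ 1 := Real.exp_le_one_iff.mpr (by linarith)
    have he0 : (0:ℝ) ≤ Real.exp (-(6*r)) := (Real.exp_pos _).le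
    have hr2 : r^2 ≤ r := by nlinarith
    have hkey : B*r^2*Real.exp (-(6*r)) ≤ B*r := by
      calc B*r^2*Real.exp (-(6*r)) ≤ B*r^2*1 :=
            mul_le_mul_of_nonneg_left he1 (by positivity)
        _ = B*r^2 := by ring
        _ ≤ B*r := mul_le_mul_of_nonneg_left hr2 hB0
    nlinarith
  calc r⁻¹ * ∫ s in Ioi (0:ℝ), Real.exp (-s) * G s
      ≤ r⁻¹ * (6*r*(A*r) + B*r^3*((6*r)⁻¹ + Real.exp (-(6*r)))) :=
        mul_le_mul_of_nonneg_left hint (inv_nonneg.mpr hr0.le)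
    _ ≤ (6*A + 7*B/6 + 1) * r := hfin
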